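/- Let A be a real symmetric positive definite matrix with Young's property A and unit diagonal. Then κ(A) = min_D κ(D A D) over positive diagonal matrices D. -/

import Mathlib

/-- The 2-norm condition number `κ(M) = ‖M‖₂ ‖M⁻¹‖₂`, via the operator norm on
Euclidean space. -/
noncomputable def kappa {n : ℕ} (M : Matrix (Fin n) (Fin n) ℝ) : ℝ :=
  ‖Matrix.toEuclideanCLM (𝕜 := ℝ) M‖ * ‖Matrix.toEuclideanCLM (𝕜 := ℝ) M⁻¹‖

/-- `A` has Young's property A: under a symmetric permutation of the indices
(choosing which indices come first, encoded by the set `S`), `A` has the block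
form `[[D₁, C₁],[C₂, D₂]]` with `D₁`, `D₂` diagonal; i.e. the two diagonal
blocks indexed by `S` and its complement are diagonal matrices. -/
def YoungPropertyA {n : ℕ} (A : Matrix (Fin n) (Fin n) ℝ) : Prop :=
  ∃ S : Finset (Fin n), ∀ i j, i ≠ j →
    ((i ∈ S ∧ j ∈ S) ∨ (i ∉ S ∧ j ∉ S)) → A i j = 0

open Matrix

private lemma FS.cs {F : Type*} [NormedAddCommGroup F] [InnerProductSpace ℝ F] (T : F →L[ℝ] F)
    (hsym : ∀ a b : F, inner (𝕜 := ℝ) (T a) b = inner (𝕜 := ℝ) a (T b))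
    (hpos : ∀ a : F, 0 ≤ inner (𝕜 := ℝ) (T a) a) (x y : F) :
    (inner (𝕜 := ℝ) (T x) y)^2 ≤ inner (𝕜 := ℝ) (T x) x * inner (𝕜 := ℝ) (T y) y := by
  have key : ∀ t : ℝ, 0 ≤ (inner (𝕜 := ℝ) (T y) y) * (t * t)
      + (2 * inner (𝕜 := ℝ) (T x) y) * t + inner (𝕜 := ℝ) (T x) x := by
    intro t
    have h := hpos (x + t • y)
    have hyx : (inner (𝕜 := ℝ) (T y) x : ℝ) = inner (𝕜 := ℝ) (T x) y := by
      rw [hsym y x, real_inner_comm]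
    have e : (inner (𝕜 := ℝ) (T (x + t • y)) (x + t • y) : ℝ)
        = inner (𝕜 := ℝ) (T x) x + (2 * inner (𝕜 := ℝ) (T x) y) * t
          + (inner (𝕜 := ℝ) (T y) y) * (t * t) := by
      rw [map_add, _root_.map_smul]
      simp only [inner_add_left, inner_add_right, real_inner_smul_left, real_inner_smul_right]
      rw [hyx]; ring
    rw [e] at h; linarith
  have hd := discrim_le_zero key
  rw [discrim] at hd
  nlinarith [hd]

private lemma FS.normle {F : Type*} [NormedAddCommGroup F] [InnerProductSpace ℝ F] (T : F →L[ℝ] F)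
    (hsym : ∀ a b : F, inner (𝕜 := ℝ) (T a) b = inner (𝕜 := ℝ) a (T b))
    (hpos : ∀ a : F, 0 ≤ inner (𝕜 := ℝ) (T a) a) {c : ℝ} (hc : 0 ≤ c)
    (hb : ∀ a : F, inner (𝕜 := ℝ) (T a) a ≤ c * ‖a‖^2) : ‖T‖ ≤ c := by
  refine ContinuousLinearMap.opNorm_le_bound T hc (fun x => ?_)
  have h1 := FS.cs T hsym hpos x (T x)
  have h2 : (inner (𝕜 := ℝ) (T x) (T x) : ℝ) = ‖T x‖^2 := real_inner_self_eq_norm_sq _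
  have h3 := hb x
  have h4 := hb (T x)
  have h5 := hpos x
  have h6 := hpos (T x)
  have hn1 : (0:ℝ) ≤ ‖T x‖ := norm_nonneg _
  have hn2 : (0:ℝ) ≤ ‖x‖ := norm_nonneg _
  have h7 : ‖T x‖^4 ≤ c^2 * ‖x‖^2 * ‖T x‖^2 := by
    nlinarith [mul_le_mul h3 h4 h6 (by positivity : (0:ℝ) ≤ c * ‖x‖^2)]
  rcases le_or_gt ‖T x‖ (c * ‖x‖) with h | h
  · exact h
  · exfalso
    have ha : 0 < ‖T x‖ := lt_of_le_of_lt (by positivity) h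
    have h8 : c^2 * ‖x‖^2 < ‖T x‖^2 := by
      nlinarith [mul_self_lt_mul_self (by positivity : (0:ℝ) ≤ c * ‖x‖) h]
    nlinarith [mul_lt_mul_of_pos_right h8 (by positivity : (0:ℝ) < ‖T x‖^2)]

private lemma FS.sq_le {F : Type*} [NormedAddCommGroup F] [InnerProductSpace ℝ F]
    (S T : F →L[ℝ] F) (hST : ∀ u, S (T u) = u)
    (hsymS : ∀ a b : F, inner (𝕜 := ℝ) (S a) b = inner (𝕜 := ℝ) a (S b))
    (hposS : ∀ a : F, 0 ≤ inner (𝕜 := ℝ) (S a) a) (u : F) :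
    ‖u‖^2 ≤ ‖S‖ * inner (𝕜 := ℝ) (T u) u := by
  rcases eq_or_ne u 0 with rfl | hu
  · simp
  have h1 := FS.cs S hsymS hposS (T u) (S (T u))
  rw [hST] at h1
  have h2 : (inner (𝕜 := ℝ) u u : ℝ) = ‖u‖^2 := real_inner_self_eq_norm_sq _
  have h3 : (inner (𝕜 := ℝ) u (T u) : ℝ) = inner (𝕜 := ℝ) (T u) u := real_inner_comm _ _
  have h4 : (inner (𝕜 := ℝ) (S u) u : ℝ) ≤ ‖S‖ * ‖u‖^2 := by
    calc (inner (𝕜 := ℝ) (S u) u : ℝ) ≤ ‖S u‖ * ‖u‖ := real_inner_le_norm _ _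
    _ ≤ (‖S‖ * ‖u‖) * ‖u‖ := by
        have := S.le_opNorm u
        have : ‖S u‖ * ‖u‖ ≤ (‖S‖ * ‖u‖) * ‖u‖ :=
          mul_le_mul_of_nonneg_right (S.le_opNorm u) (norm_nonneg _)
        linarith
    _ = ‖S‖ * ‖u‖^2 := by ring
  have hu0 : (0:ℝ) < ‖u‖ := norm_pos_iff.mpr hu
  have hun : (0:ℝ) < ‖u‖^2 := by positivity
  have h5 : 0 ≤ inner (𝕜 := ℝ) (S u) u := hposS u
  -- ‖u‖^4 ≤ ⟪Tu,u⟫ * (‖S‖ ‖u‖^2)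
  have h6 : ‖u‖^2 * ‖u‖^2 ≤ inner (𝕜 := ℝ) (T u) u * (‖S‖ * ‖u‖^2) := by
    calc ‖u‖^2 * ‖u‖^2 = (inner (𝕜 := ℝ) u u : ℝ)^2 := by rw [h2]; ring
    _ ≤ inner (𝕜 := ℝ) u (T u) * inner (𝕜 := ℝ) (S u) u := h1
    _ ≤ inner (𝕜 := ℝ) (T u) u * (‖S‖ * ‖u‖^2) := by
        rw [h3]
        have hTu : 0 ≤ (inner (𝕜 := ℝ) (T u) u : ℝ) := by
          have := hposS (T u); rw [hST] at this; rwa [← h3]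
        exact mul_le_mul_of_nonneg_left h4 hTu |>.trans_eq rfl
  nlinarith [h6, hun]

private lemma FS.inner_clm {n : ℕ} (M : Matrix (Fin n) (Fin n) ℝ) (x y : EuclideanSpace ℝ (Fin n)) :
    inner (𝕜 := ℝ) (toEuclideanCLM (𝕜 := ℝ) M x) y
      = (M *ᵥ (WithLp.equiv 2 _ x)) ⬝ᵥ (WithLp.equiv 2 _ y) := by
  simp [PiLp.inner_apply, RCLike.inner_apply, dotProduct, mul_comm]

private lemma FS.ne_zero {n : ℕ} {x : EuclideanSpace ℝ (Fin n)} (hx : x ≠ 0) :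
    (WithLp.equiv 2 (Fin n → ℝ) x) ≠ 0 := by
  intro h
  apply hx
  have := congrArg (WithLp.equiv 2 (Fin n → ℝ)).symm h
  simpa using this

private lemma FS.pos_clm {n : ℕ} {M : Matrix (Fin n) (Fin n) ℝ} (hM : M.PosDef)
    {x : EuclideanSpace ℝ (Fin n)} (hx : x ≠ 0) :
    0 < inner (𝕜 := ℝ) (toEuclideanCLM (𝕜 := ℝ) M x) x := by
  rw [FS.inner_clm]
  have h := hM.dotProduct_mulVec_pos (FS.ne_zero hx)
  simpa [dotProduct_comm, star_trivial] using h

private lemma FS.exists_eig {n : ℕ} (hn : 0 < n) (M : Matrix (Fin n) (Fin n) ℝ) (hM : M.PosDef) :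
    ∃ (z : EuclideanSpace ℝ (Fin n)) (α : ℝ), ‖z‖ = 1 ∧ 0 < α ∧
      Matrix.toEuclideanCLM (𝕜 := ℝ) M z = α • z ∧ ‖Matrix.toEuclideanCLM (𝕜 := ℝ) M‖ = α := by
  haveI : Nontrivial (EuclideanSpace ℝ (Fin n)) := by
    refine ⟨⟨EuclideanSpace.single ⟨0, hn⟩ 1, 0, ?_⟩⟩
    intro h
    have := congrArg (fun v => ‖v‖) h
    simp [EuclideanSpace.norm_single] at this
  set T := Matrix.toEuclideanCLM (𝕜 := ℝ) M with hTdef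
  have hsa : IsSelfAdjoint T := by
    show star T = T
    rw [hTdef, ← map_star]
    congr 1
    rw [Matrix.star_eq_conjTranspose]
    exact hM.1
  have hsym : ∀ a b : EuclideanSpace ℝ (Fin n),
      inner (𝕜 := ℝ) (T a) b = inner (𝕜 := ℝ) a (T b) := fun a b => hsa.isSymmetric a b
  obtain ⟨x₀, hx₀s, hmax⟩ := (isCompact_sphere (0 : EuclideanSpace ℝ (Fin n)) 1).exists_isMaxOn
    (NormedSpace.sphere_nonempty.mpr zero_le_one) T.reApplyInnerSelf_continuous.continuousOn
  have hx₀n : ‖x₀‖ = 1 := by simpa using hx₀s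
  have hx₀ : x₀ ≠ 0 := by intro h; rw [h] at hx₀n; simp at hx₀n
  have hmax' : IsMaxOn T.reApplyInnerSelf (Metric.sphere (0 : EuclideanSpace ℝ (Fin n)) ‖x₀‖) x₀ := by
    rwa [hx₀n]
  have hev := (hsa.hasEigenvector_of_isMaxOn hx₀ hmax').apply_eq_smul
  set α : ℝ := inner (𝕜 := ℝ) (T x₀) x₀ with hαdef
  have happ : T x₀ = α • x₀ := by
    have h2 : (inner (𝕜 := ℝ) x₀ x₀ : ℝ) = 1 := by
      rw [real_inner_self_eq_norm_sq, hx₀n]; norm_num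
    rw [show (T x₀ : EuclideanSpace ℝ (Fin n)) = _ from hev] at hαdef ⊢
    rw [real_inner_smul_left, h2, mul_one] at hαdef
    rw [← hαdef]
  have hre : ∀ w : EuclideanSpace ℝ (Fin n),
      T.reApplyInnerSelf w = inner (𝕜 := ℝ) (T w) w := fun w => rfl
  have hαpos : 0 < α := FS.pos_clm hM hx₀
  have hray : ∀ v : EuclideanSpace ℝ (Fin n), inner (𝕜 := ℝ) (T v) v ≤ α * ‖v‖^2 := by
    intro v
    rcases eq_or_ne v 0 with rfl | hv
    · simp
    · have hnv : (0:ℝ) < ‖v‖ := norm_pos_iff.mpr hv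
      have hmem : (‖v‖⁻¹ • v) ∈ Metric.sphere (0 : EuclideanSpace ℝ (Fin n)) 1 := by
        simp [norm_smul, abs_of_pos hnv, inv_mul_cancel₀ hnv.ne']
      have hle : T.reApplyInnerSelf (‖v‖⁻¹ • v) ≤ α := hmax hmem
      rw [hre, _root_.map_smul, real_inner_smul_left, real_inner_smul_right] at hle
      have heq : (inner (𝕜 := ℝ) (T v) v : ℝ)
          = ‖v‖^2 * (‖v‖⁻¹ * (‖v‖⁻¹ * inner (𝕜 := ℝ) (T v) v)) := by
        field_simp
      rw [heq]
      calc ‖v‖^2 * (‖v‖⁻¹ * (‖v‖⁻¹ * inner (𝕜 := ℝ) (T v) v)) ≤ ‖v‖^2 * α :=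
            mul_le_mul_of_nonneg_left hle (by positivity)
      _ = α * ‖v‖^2 := by ring
  have hpos' : ∀ a : EuclideanSpace ℝ (Fin n), 0 ≤ inner (𝕜 := ℝ) (T a) a := by
    intro a
    rcases eq_or_ne a 0 with rfl | ha
    · simp
    · exact (FS.pos_clm hM ha).le
  have hnorm : ‖T‖ = α := by
    refine le_antisymm (FS.normle T hsym hpos' hαpos.le hray) ?_
    have h1 : ‖T x₀‖ = α := by
      rw [happ, norm_smul, hx₀n, mul_one, Real.norm_eq_abs, abs_of_pos hαpos]
    calc α = ‖T x₀‖ := h1.symm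
    _ ≤ ‖T‖ * ‖x₀‖ := T.le_opNorm x₀
    _ = ‖T‖ := by rw [hx₀n, mul_one]
  exact ⟨x₀, α, hx₀n, hαpos, happ, hnorm⟩


private lemma FS.arith {a m K : ℝ} (ha : 0 < a) (h2a : 0 < 2 - a)
    (hmb : m * (2 - a) ≤ 1) (hK2 : a ≤ (2 - a) * K) : a * m ≤ K := by
  have e1 : a * (m * (2 - a)) ≤ a * 1 := mul_le_mul_of_nonneg_left hmb ha.le
  nlinarith [e1, hK2, h2a, ha]

/-- Forsythe–Straus: if `A` is symmetric positive definite with unit diagonal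
and Young's property A, then `κ(A) = min_D κ(D A D)` over positive diagonal
matrices `D`. -/
theorem stmt_19 (n : ℕ) (A : Matrix (Fin n) (Fin n) ℝ)
    (hA : A.PosDef) (hdiag : ∀ i, A i i = 1) (hyoung : YoungPropertyA A) :
    IsLeast {x : ℝ | ∃ d : Fin n → ℝ, (∀ i, 0 < d i) ∧
        x = kappa (Matrix.diagonal d * A * Matrix.diagonal d)}
      (kappa A) := by
  constructor
  · refine ⟨fun _ => 1, fun _ => one_pos, ?_⟩
    have h1 : (Matrix.diagonal (fun _ => (1:ℝ)) : Matrix (Fin n) (Fin n) ℝ) = 1 :=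
      Matrix.diagonal_one
    rw [h1, Matrix.one_mul, Matrix.mul_one]
  rintro x ⟨d, hd, rfl⟩
  set B : Matrix (Fin n) (Fin n) ℝ := Matrix.diagonal d * A * Matrix.diagonal d with hBdef
  rcases Nat.eq_zero_or_pos n with rfl | hn
  · -- degenerate case n = 0
    haveI : Subsingleton (EuclideanSpace ℝ (Fin 0)) :=
      ⟨fun a b => by ext i; exact i.elim0⟩
    have hz : ∀ M : Matrix (Fin 0) (Fin 0) ℝ, ‖Matrix.toEuclideanCLM (𝕜 := ℝ) M‖ = 0 := by
      intro M
      refine le_antisymm (ContinuousLinearMap.opNorm_le_bound _ le_rfl fun v => ?_)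
        (norm_nonneg _)
      rw [Subsingleton.elim (Matrix.toEuclideanCLM (𝕜 := ℝ) M v) 0]
      simp
    have h1 : kappa A = 0 := by rw [kappa, hz, hz, mul_zero]
    rw [h1, kappa]
    positivity
  -- main case
  obtain ⟨Sset, hS⟩ := hyoung
  classical
  set ε : Fin n → ℝ := fun i => if i ∈ Sset then 1 else -1 with hεdef
  have hε2 : ∀ i, ε i * ε i = 1 := by
    intro i; by_cases h : i ∈ Sset <;> simp [hεdef, h]
  set Jm : Matrix (Fin n) (Fin n) ℝ := Matrix.diagonal ε with hJmdef
  have hεpos : ∀ i, i ∈ Sset → ε i = 1 := fun i h => if_pos h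
  have hεneg : ∀ i, i ∉ Sset → ε i = -1 := fun i h => if_neg h
  have hJJ : Jm * Jm = 1 := by
    rw [hJmdef, Matrix.diagonal_mul_diagonal, show (fun i => ε i * ε i) = fun _ => (1:ℝ) from funext hε2, Matrix.diagonal_one]
  have hJAJ : Jm * A * Jm = (2:ℝ) • (1 : Matrix (Fin n) (Fin n) ℝ) - A := by
    ext i j
    have hentry : (Jm * A * Jm) i j = ε i * A i j * ε j := by
      rw [hJmdef, Matrix.mul_diagonal, Matrix.diagonal_mul]
    rw [hentry]
    simp only [Matrix.sub_apply, Matrix.smul_apply, Matrix.one_apply, smul_eq_mul]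
    by_cases hij : i = j
    · subst hij
      rw [if_pos rfl, hdiag i]
      linear_combination (1:ℝ) * hε2 i
    · rw [if_neg hij]
      by_cases hi : i ∈ Sset <;> by_cases hj : j ∈ Sset
      · rw [hS i j hij (Or.inl ⟨hi, hj⟩)]; ring
      · rw [hεpos i hi, hεneg j hj]; ring
      · rw [hεneg i hi, hεpos j hj]; ring
      · rw [hS i j hij (Or.inr ⟨hi, hj⟩)]; ring
  have hAJ : A * Jm = Jm * ((2:ℝ) • (1 : Matrix (Fin n) (Fin n) ℝ) - A) := by
    rw [← hJAJ, ← Matrix.mul_assoc, ← Matrix.mul_assoc, hJJ, Matrix.one_mul]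
  -- continuous linear maps
  set T := Matrix.toEuclideanCLM (𝕜 := ℝ) A with hTdef
  set Tj := Matrix.toEuclideanCLM (𝕜 := ℝ) Jm with hTjdef
  have hmapmul : ∀ (P Q : Matrix (Fin n) (Fin n) ℝ) (v : EuclideanSpace ℝ (Fin n)),
      Matrix.toEuclideanCLM (𝕜 := ℝ) (P * Q) v
        = Matrix.toEuclideanCLM (𝕜 := ℝ) P (Matrix.toEuclideanCLM (𝕜 := ℝ) Q v) := by
    intro P Q v
    rw [_root_.map_mul]
    rfl
  have hTj2 : ∀ v, Tj (Tj v) = v := by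
    intro v
    rw [hTjdef, ← hmapmul, hJJ, _root_.map_one]
    rfl
  have hcomm : ∀ v, T (Tj v) = Tj ((2:ℝ) • v - T v) := by
    intro v
    have h1 := hmapmul A Jm v
    rw [hAJ, hmapmul] at h1
    rw [← h1]
    congr 1
    rw [map_sub, _root_.map_smul, _root_.map_one]
    rfl
  -- eigenvectors
  obtain ⟨z, α, hz1, hα, hzA, hnA⟩ := FS.exists_eig hn A hA
  obtain ⟨w, μ, hw1, hμ, hwS, hnS⟩ := FS.exists_eig hn A⁻¹ hA.inv
  have hdetA : IsUnit A.det := isUnit_iff_ne_zero.mpr hA.det_pos.ne'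
  have hTS : ∀ v, T (Matrix.toEuclideanCLM (𝕜 := ℝ) A⁻¹ v) = v := by
    intro v
    rw [hTdef, ← hmapmul, Matrix.mul_nonsing_inv A hdetA, _root_.map_one]
    rfl
  have hTw : T w = μ⁻¹ • w := by
    have h1 := hTS w
    rw [hwS, _root_.map_smul] at h1
    have h2 := congrArg (fun u => μ⁻¹ • u) h1
    simp only [smul_smul, inv_mul_cancel₀ hμ.ne', one_smul] at h2
    exact h2
  have hzne : z ≠ 0 := by
    intro h; rw [h] at hz1; simp at hz1
  have hwne : w ≠ 0 := by
    intro h; rw [h] at hw1; simp at hw1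
  have hTjne : ∀ v : EuclideanSpace ℝ (Fin n), v ≠ 0 → Tj v ≠ 0 := by
    intro v hv h
    apply hv
    rw [← hTj2 v, h, map_zero]
  -- eigen equation for Tj z and Tj w
  have hTTjz : T (Tj z) = (2 - α) • Tj z := by
    rw [hcomm, hzA, ← _root_.map_smul]
    congr 1
    module
  have hTTjw : T (Tj w) = (2 - μ⁻¹) • Tj w := by
    rw [hcomm, hTw, ← _root_.map_smul]
    congr 1
    module
  -- 2 - α > 0
  have h2α : 0 < 2 - α := by
    have hvne := hTjne z hzne
    have hpos := FS.pos_clm hA hvne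
    rw [← hTdef, hTTjz, real_inner_smul_left] at hpos
    have hip : 0 < (inner (𝕜 := ℝ) (Tj z) (Tj z) : ℝ) := by
      rw [real_inner_self_eq_norm_sq]
      have := norm_pos_iff.mpr hvne
      positivity
    nlinarith [hpos, hip]
  -- bound on μ
  have hwJ := hTjne w hwne
  have hnTjw : (0:ℝ) < ‖Tj w‖ := norm_pos_iff.mpr hwJ
  have hb1 : 2 - μ⁻¹ ≤ α := by
    have h1 : ‖T (Tj w)‖ ≤ α * ‖Tj w‖ := by
      calc ‖T (Tj w)‖ ≤ ‖T‖ * ‖Tj w‖ := T.le_opNorm _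
      _ = α * ‖Tj w‖ := by rw [hTdef, hnA]
    rw [hTTjw, norm_smul, Real.norm_eq_abs] at h1
    have h2 : |2 - μ⁻¹| ≤ α := le_of_mul_le_mul_right h1 hnTjw
    calc 2 - μ⁻¹ ≤ |2 - μ⁻¹| := le_abs_self _
    _ ≤ α := h2
  have hμb : μ * (2 - α) ≤ 1 := by
    have h3 : 2 - α ≤ μ⁻¹ := by linarith
    calc μ * (2 - α) ≤ μ * μ⁻¹ := mul_le_mul_of_nonneg_left h3 hμ.le
    _ = 1 := mul_inv_cancel₀ hμ.ne'
  -- B is positive definite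
  have hdne : ∀ i, d i ≠ 0 := fun i => (hd i).ne'
  have hBv : ∀ v : Fin n → ℝ,
      B *ᵥ v = Matrix.diagonal d *ᵥ (A *ᵥ (Matrix.diagonal d *ᵥ v)) := by
    intro v
    rw [hBdef, ← Matrix.mulVec_mulVec, ← Matrix.mulVec_mulVec]
  have hswap : ∀ v u : Fin n → ℝ, star v ⬝ᵥ (Matrix.diagonal d *ᵥ u)
      = star (Matrix.diagonal d *ᵥ v) ⬝ᵥ u := by
    intro v u
    simp only [dotProduct, Matrix.mulVec_diagonal, Pi.star_apply, star_trivial]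
    exact Finset.sum_congr rfl fun i _ => by ring
  have hBpd : B.PosDef := by
    refine Matrix.PosDef.of_dotProduct_mulVec_pos ?_ ?_
    · show Bᴴ = B
      rw [hBdef, Matrix.conjTranspose_mul, Matrix.conjTranspose_mul,
        Matrix.diagonal_conjTranspose]
      have hsd : star d = d := funext fun i => star_trivial _
      rw [hsd, hA.1.eq, Matrix.mul_assoc]
    · intro v hv
      have hDv : (Matrix.diagonal d *ᵥ v) ≠ 0 := by
        intro h
        apply hv
        funext i
        have h2 := congrFun h i
        rw [Matrix.mulVec_diagonal] at h2
        exact (mul_eq_zero.mp h2).resolve_left (hdne i)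
      have hpos := hA.dotProduct_mulVec_pos hDv
      rw [hBv v, hswap]
      exact hpos
  set TB := Matrix.toEuclideanCLM (𝕜 := ℝ) B with hTBdef
  set SB := Matrix.toEuclideanCLM (𝕜 := ℝ) B⁻¹ with hSBdef
  have hdetB : IsUnit B.det := isUnit_iff_ne_zero.mpr hBpd.det_pos.ne'
  have hSBTB : ∀ u, SB (TB u) = u := by
    intro u
    rw [hSBdef, hTBdef, ← hmapmul, Matrix.nonsing_inv_mul B hdetB, _root_.map_one]
    rfl
  have hBinv : B⁻¹.PosDef := hBpd.inv
  have hsaSB : IsSelfAdjoint SB := by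
    show star SB = SB
    rw [hSBdef, ← map_star]
    congr 1
    rw [Matrix.star_eq_conjTranspose]
    exact hBinv.1
  have hsymSB : ∀ a b : EuclideanSpace ℝ (Fin n),
      inner (𝕜 := ℝ) (SB a) b = inner (𝕜 := ℝ) a (SB b) := fun a b => hsaSB.isSymmetric a b
  have hposSB : ∀ a : EuclideanSpace ℝ (Fin n), 0 ≤ inner (𝕜 := ℝ) (SB a) a := by
    intro a
    rcases eq_or_ne a 0 with rfl | ha
    · simp
    · exact (FS.pos_clm hBinv ha).le
  -- coordinates of the eigenvectors
  set z' : Fin n → ℝ := WithLp.equiv 2 (Fin n → ℝ) z with hz'def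
  have hinner_sum : ∀ f g : Fin n → ℝ,
      (inner (𝕜 := ℝ) ((WithLp.equiv 2 (Fin n → ℝ)).symm f)
        ((WithLp.equiv 2 (Fin n → ℝ)).symm g) : ℝ) = ∑ i, f i * g i := by
    intro f g
    simp [PiLp.inner_apply, RCLike.inner_apply]
    exact Finset.sum_congr rfl fun i _ => mul_comm _ _
  have hz'sum : ∑ i, z' i * z' i = 1 := by
    have h1 : (inner (𝕜 := ℝ) z z : ℝ) = ∑ i, z' i * z' i := by
      exact hinner_sum z' z'
    rw [real_inner_self_eq_norm_sq, hz1] at h1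
    rw [← h1]
    norm_num
  have hmz : A *ᵥ z' = α • z' := by
    have h1 := congrArg (WithLp.equiv 2 (Fin n → ℝ)) hzA
    simpa [Matrix.ofLp_toEuclideanCLM, Matrix.toLin'_apply, hz'def] using h1
  have hJz : WithLp.equiv 2 (Fin n → ℝ) (Tj z) = fun i => ε i * z' i := by
    have h1 : WithLp.equiv 2 (Fin n → ℝ) (Tj z) = Jm *ᵥ z' := by
      rw [hTjdef]
      simp [Matrix.ofLp_toEuclideanCLM, Matrix.toLin'_apply, hz'def]
    rw [h1]
    funext i
    rw [hJmdef, Matrix.mulVec_diagonal]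
  have hmJz : A *ᵥ (fun i => ε i * z' i) = (2 - α) • (fun i => ε i * z' i) := by
    have h1 := congrArg (WithLp.equiv 2 (Fin n → ℝ)) hTTjz
    rw [hTdef] at h1
    simp only [Matrix.ofLp_toEuclideanCLM, Matrix.toLin'_apply, WithLp.equiv_apply, WithLp.ofLp_smul] at h1
    rw [WithLp.equiv_apply] at hJz
    rw [hJz] at h1
    exact h1
  -- the test vectors
  set xf : Fin n → ℝ := fun i => (d i)⁻¹ * z' i with hxfdef
  set yf : Fin n → ℝ := fun i => (d i)⁻¹ * (ε i * z' i) with hyfdef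
  set xv : EuclideanSpace ℝ (Fin n) := (WithLp.equiv 2 (Fin n → ℝ)).symm xf with hxvdef
  set yv : EuclideanSpace ℝ (Fin n) := (WithLp.equiv 2 (Fin n → ℝ)).symm yf with hyvdef
  have hequivx : WithLp.equiv 2 (Fin n → ℝ) xv = xf := Equiv.apply_symm_apply _ _
  have hequivy : WithLp.equiv 2 (Fin n → ℝ) yv = yf := Equiv.apply_symm_apply _ _
  have hdx : Matrix.diagonal d *ᵥ xf = z' := by
    funext i
    rw [Matrix.mulVec_diagonal, hxfdef, ← mul_assoc, mul_inv_cancel₀ (hdne i), one_mul]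
  have hdy : Matrix.diagonal d *ᵥ yf = fun i => ε i * z' i := by
    funext i
    rw [Matrix.mulVec_diagonal, hyfdef, ← mul_assoc, mul_inv_cancel₀ (hdne i), one_mul]
  have hBx : B *ᵥ xf = fun i => α * (d i * z' i) := by
    rw [hBv, hdx, hmz, Matrix.mulVec_smul]
    funext i
    rw [Pi.smul_apply, Matrix.mulVec_diagonal, smul_eq_mul]
  have hBy : B *ᵥ yf = fun i => (2 - α) * (d i * (ε i * z' i)) := by
    rw [hBv, hdy, hmJz, Matrix.mulVec_smul]
    funext i
    rw [Pi.smul_apply, Matrix.mulVec_diagonal, smul_eq_mul]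
  have hix : (inner (𝕜 := ℝ) (TB xv) xv : ℝ) = α := by
    rw [hTBdef, FS.inner_clm, hequivx, hBx]
    rw [dotProduct]
    have h1 : ∀ i : Fin n, (fun i => α * (d i * z' i)) i * xf i = α * (z' i * z' i) := by
      intro i
      show α * (d i * z' i) * ((d i)⁻¹ * z' i) = α * (z' i * z' i)
      rw [show α * (d i * z' i) * ((d i)⁻¹ * z' i)
          = (d i * (d i)⁻¹) * (α * (z' i * z' i)) from by ring,
        mul_inv_cancel₀ (hdne i), one_mul]
    rw [Finset.sum_congr rfl fun i _ => h1 i, ← Finset.mul_sum, hz'sum, mul_one]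
  have hiy : (inner (𝕜 := ℝ) (TB yv) yv : ℝ) = 2 - α := by
    rw [hTBdef, FS.inner_clm, hequivy, hBy]
    rw [dotProduct]
    have h1 : ∀ i : Fin n, (fun i => (2 - α) * (d i * (ε i * z' i))) i * yf i
        = (2 - α) * (z' i * z' i) := by
      intro i
      show (2 - α) * (d i * (ε i * z' i)) * ((d i)⁻¹ * (ε i * z' i)) = (2 - α) * (z' i * z' i)
      rw [show (2 - α) * (d i * (ε i * z' i)) * ((d i)⁻¹ * (ε i * z' i))
          = (d i * (d i)⁻¹) * ((ε i * ε i) * ((2 - α) * (z' i * z' i))) from by ring,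
        mul_inv_cancel₀ (hdne i), hε2 i, one_mul, one_mul]
    rw [Finset.sum_congr rfl fun i _ => h1 i, ← Finset.mul_sum, hz'sum, mul_one]
  have hnxy : ‖xv‖^2 = ‖yv‖^2 := by
    rw [← real_inner_self_eq_norm_sq, ← real_inner_self_eq_norm_sq, hxvdef, hyvdef,
      hinner_sum, hinner_sum]
    refine Finset.sum_congr rfl fun i _ => ?_
    show ((d i)⁻¹ * z' i) * ((d i)⁻¹ * z' i)
        = ((d i)⁻¹ * (ε i * z' i)) * ((d i)⁻¹ * (ε i * z' i))
    linear_combination (-((d i)⁻¹ * (d i)⁻¹ * (z' i * z' i))) * hε2 i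
  have hxne : xv ≠ 0 := by
    have hzi : ∃ i, z' i ≠ 0 := by
      by_contra h
      push_neg at h
      rw [Finset.sum_eq_zero (fun i _ => by rw [h i, zero_mul])] at hz'sum
      norm_num at hz'sum
    obtain ⟨i, hi⟩ := hzi
    intro h
    apply hi
    have h2 := congrArg (WithLp.equiv 2 (Fin n → ℝ)) h
    rw [hequivx] at h2
    have h3 := congrFun h2 i
    rw [hxfdef] at h3
    simp only [Pi.zero_apply] at h3
    have h4 := mul_eq_zero.mp h3
    exact h4.resolve_left (inv_ne_zero (hdne i))
  -- the two key inequalities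
  have i1 : α ≤ ‖TB‖ * ‖xv‖^2 := by
    rw [← hix]
    calc (inner (𝕜 := ℝ) (TB xv) xv : ℝ) ≤ ‖TB xv‖ * ‖xv‖ := real_inner_le_norm _ _
    _ ≤ (‖TB‖ * ‖xv‖) * ‖xv‖ :=
        mul_le_mul_of_nonneg_right (TB.le_opNorm xv) (norm_nonneg _)
    _ = ‖TB‖ * ‖xv‖^2 := by ring
  have i2 : ‖yv‖^2 ≤ ‖SB‖ * (2 - α) := by
    have h1 := FS.sq_le SB TB hSBTB hsymSB hposSB yv
    rwa [hiy] at h1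
  have hKB : α ≤ (2 - α) * (‖TB‖ * ‖SB‖) := by
    have hTBnn : (0:ℝ) ≤ ‖TB‖ := norm_nonneg _
    calc α ≤ ‖TB‖ * ‖xv‖^2 := i1
    _ = ‖TB‖ * ‖yv‖^2 := by rw [hnxy]
    _ ≤ ‖TB‖ * (‖SB‖ * (2 - α)) := mul_le_mul_of_nonneg_left i2 hTBnn
    _ = (2 - α) * (‖TB‖ * ‖SB‖) := by ring
  -- conclusion
  have hKnn : (0:ℝ) ≤ ‖TB‖ * ‖SB‖ := mul_nonneg (norm_nonneg _) (norm_nonneg _)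
  have final : α * μ ≤ ‖TB‖ * ‖SB‖ := FS.arith hα h2α hμb hKB
  have hkA : kappa A = α * μ := by
    unfold kappa
    rw [hnA, hnS]
  have hkB : kappa B = ‖TB‖ * ‖SB‖ := rfl
  show kappa A ≤ kappa B
  rw [hkA, hkB]
  exact final
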